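/- For the time evolution U(t) = exp(−i H_R t) with H_R = (1/4)·[[g_zz,0,0,0],[0,−g_zz,g_yy,0],[0,g_yy,−g_zz,0],[0,0,0,g_zz]] (i.e., Δ = 0), the average-fidelity error E(g_zz) = 1 − (|Tr(V†U(π/g_yy))|² + 4)/20, with V = SQiSW†, satisfies E(g_zz) = (π²/20)·(g_zz/g_yy)² + O((g_zz/g_yy)⁴) as g_zz/g_yy → 0. -/

import Mathlib

open Complex Matrix Asymptotics

noncomputable def HR (gyy gzz : ℝ) : Matrix (Fin 4) (Fin 4) ℂ :=
  ((1 : ℂ) / 4) • !![(gzz : ℂ), 0, 0, 0;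
                     0, -(gzz : ℂ), (gyy : ℂ), 0;
                     0, (gyy : ℂ), -(gzz : ℂ), 0;
                     0, 0, 0, (gzz : ℂ)]

noncomputable def SQiSWdag : Matrix (Fin 4) (Fin 4) ℂ :=
  !![1, 0, 0, 0;
     0, 1 / Real.sqrt 2, -I / Real.sqrt 2, 0;
     0, -I / Real.sqrt 2, 1 / Real.sqrt 2, 0;
     0, 0, 0, 1]

noncomputable def Pm : Matrix (Fin 4) (Fin 4) ℂ :=
  !![1,0,0,0; 0,1,1,0; 0,1,-1,0; 0,0,0,1]
noncomputable def Qm : Matrix (Fin 4) (Fin 4) ℂ :=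
  !![1,0,0,0; 0,1/2,1/2,0; 0,1/2,-1/2,0; 0,0,0,1]

lemma PQ : Pm * Qm = 1 := by
  ext i j
  fin_cases i <;> fin_cases j <;>
    simp [Pm, Qm, Matrix.mul_apply, Fin.sum_univ_four, Matrix.one_apply,
      Matrix.vecHead, Matrix.vecTail] <;> norm_num

lemma Qinv : Pm⁻¹ = Qm := Matrix.inv_eq_right_inv PQ

noncomputable def dv (gyy gzz : ℝ) (s : ℂ) : Fin 4 → ℂ :=
  ![s*(gzz/4), s*((gyy-gzz)/4), s*((-gyy-gzz)/4), s*(gzz/4)]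

lemma conj_eq (gyy gzz : ℝ) (s : ℂ) :
    s • HR gyy gzz = Pm * Matrix.diagonal (dv gyy gzz s) * Pm⁻¹ := by
  rw [Qinv]
  ext i j
  fin_cases i <;> fin_cases j <;>
    simp [HR, Pm, Qm, dv, Matrix.mul_apply, Fin.sum_univ_four, Matrix.diagonal,
      Matrix.vecHead, Matrix.vecTail] <;> (first | exact Or.inl (by ring) | ring1)

lemma exp_HR (gyy gzz : ℝ) (s : ℂ) :
    NormedSpace.exp (s • HR gyy gzz)
      = Pm * Matrix.diagonal (fun i => Complex.exp (dv gyy gzz s i)) * Pm⁻¹ := by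
  have hU : IsUnit Pm := by
    rw [Matrix.isUnit_iff_isUnit_det]
    exact IsUnit.of_mul_eq_one _ (by rw [← Matrix.det_mul, PQ, Matrix.det_one])
  rw [conj_eq, Matrix.exp_conj Pm (Matrix.diagonal (dv gyy gzz s)) hU,
    Matrix.exp_diagonal]
  congr 2
  funext i
  rw [Pi.exp_def]
  simp [Complex.exp_eq_exp_ℂ]

lemma SQdagH : SQiSWdagᴴ = !![1, 0, 0, 0;
     0, (1 : ℂ) / Real.sqrt 2, I / Real.sqrt 2, 0;
     0, I / Real.sqrt 2, (1 : ℂ) / Real.sqrt 2, 0;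
     0, 0, 0, 1] := by
  ext i j
  fin_cases i <;> fin_cases j <;>
    simp [SQiSWdag, Matrix.conjTranspose_apply, div_eq_mul_inv, Matrix.vecHead, Matrix.vecTail]

lemma diag_lit (v : Fin 4 → ℂ) :
    Matrix.diagonal v = !![v 0,0,0,0; 0,v 1,0,0; 0,0,v 2,0; 0,0,0,v 3] := by
  ext i j
  fin_cases i <;> fin_cases j <;> simp [Matrix.diagonal_apply, Matrix.vecHead, Matrix.vecTail]

set_option maxHeartbeats 1000000 in
lemma trace_eq (gyy gzz : ℝ) (hg : gyy ≠ 0) :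
    (SQiSWdagᴴ * NormedSpace.exp ((-(I * ((Real.pi : ℝ) / gyy))) • HR gyy gzz)).trace
      = 4 * Complex.cos (Real.pi * gzz / (4 * gyy)) := by
  rw [exp_HR, Qinv, SQdagH, diag_lit]
  simp only [Matrix.trace, Matrix.diag, Matrix.mul_apply, Fin.sum_univ_four, Pm, Qm, dv,
    Matrix.cons_val', Matrix.cons_val, Matrix.cons_val_zero, Matrix.cons_val_one, Matrix.head_cons,
    Matrix.empty_val', Matrix.cons_val_fin_one, Matrix.head_fin_const,
    Matrix.vecHead, Matrix.vecTail, Matrix.of_apply, Function.comp]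
  norm_num
  have hgc : (gyy : ℂ) ≠ 0 := Complex.ofReal_ne_zero.mpr hg
  have h2 : (Real.sqrt 2 : ℂ) ≠ 0 := by
    norm_cast
    positivity
  have hsq : (Real.sqrt 2 : ℂ) * (Real.sqrt 2 : ℂ) = 2 := by
    norm_cast
    exact Real.mul_self_sqrt (by norm_num)
  set ac : ℂ := (Real.pi : ℂ) * gzz / (4 * gyy) with hac
  have hA0 : -(Complex.I * (↑Real.pi / ↑gyy) * (↑gzz / 4)) = -(ac * I) := by
    rw [hac]; field_simp
  have hA1 : -(Complex.I * (↑Real.pi / ↑gyy) * ((↑gyy - ↑gzz) / 4))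
      = (↑(-(Real.pi/4)) : ℂ) * I + ac * I := by
    rw [hac]; push_cast; field_simp; ring
  have hA2 : -(Complex.I * (↑Real.pi / ↑gyy) * ((-↑gyy - ↑gzz) / 4))
      = (↑(Real.pi/4) : ℂ) * I + ac * I := by
    rw [hac]; push_cast; field_simp; ring
  have hc1 : Complex.exp ((↑(-(Real.pi/4)) : ℂ) * I)
      = (Real.sqrt 2 : ℂ)/2 - (Real.sqrt 2 : ℂ)/2 * I := by
    rw [Complex.exp_mul_I, ← Complex.ofReal_cos, ← Complex.ofReal_sin,
      Real.cos_neg, Real.sin_neg, Real.cos_pi_div_four, Real.sin_pi_div_four]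
    push_cast
    ring
  have hc2 : Complex.exp ((↑(Real.pi/4) : ℂ) * I)
      = (Real.sqrt 2 : ℂ)/2 + (Real.sqrt 2 : ℂ)/2 * I := by
    rw [Complex.exp_mul_I, ← Complex.ofReal_cos, ← Complex.ofReal_sin,
      Real.cos_pi_div_four, Real.sin_pi_div_four]
    push_cast
    ring
  rw [hA0, hA1, hA2, Complex.exp_add, Complex.exp_add, hc1, hc2, Complex.cos, neg_mul]
  set X := Complex.exp (ac * I) with hXdef
  set Y := Complex.exp (-(ac * I)) with hYdef
  field_simp
  linear_combination (-4 * X) * Complex.I_mul_I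

noncomputable def Egate (gyy gzz : ℝ) : ℝ :=
  1 - ((‖(SQiSWdagᴴ *
      NormedSpace.exp ((-(I * ((Real.pi : ℝ) / gyy))) • HR gyy gzz)).trace‖) ^ 2 + 4) / 20

lemma Egate_eq (gyy gzz : ℝ) (hg : gyy ≠ 0) :
    Egate gyy gzz = 4/5 * Real.sin (Real.pi * gzz / (4 * gyy)) ^ 2 := by
  rw [Egate, trace_eq gyy gzz hg]
  have harg : ((Real.pi : ℂ) * gzz / (4 * gyy)) = ((Real.pi * gzz / (4 * gyy) : ℝ) : ℂ) := by
    push_cast; ring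
  have habs : ‖4 * Complex.cos ((Real.pi : ℂ) * gzz / (4 * gyy))‖
      = 4 * |Real.cos (Real.pi * gzz / (4 * gyy))| := by
    rw [harg, ← Complex.ofReal_cos, norm_mul, Complex.norm_real, Real.norm_eq_abs]
    norm_num
  rw [habs]
  have h := Real.sin_sq_add_cos_sq (Real.pi * gzz / (4 * gyy))
  have hsq := _root_.sq_abs (Real.cos (Real.pi * gzz / (4 * gyy)))
  nlinarith [hsq, h]

lemma key_ineq (t : ℝ) (h : |t| ≤ 1) : |Real.sin t ^ 2 - t ^ 2| ≤ 2 * t ^ 4 := by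
  have hb := Real.sin_bound h
  have hs : |Real.sin t| ≤ |t| := Real.abs_sin_le_abs
  have h1 : |Real.sin t - t| ≤ |t| ^ 3 := by
    have e1 : |Real.sin t - t| ≤ |Real.sin t - (t - t ^ 3 / 6)| + |t ^ 3 / 6| := by
      have : Real.sin t - t = (Real.sin t - (t - t ^ 3 / 6)) + (-(t ^ 3 / 6)) := by ring
      rw [this]
      have h5 := abs_add_le (Real.sin t - (t - t ^ 3 / 6)) (-(t ^ 3 / 6))
      rw [_root_.abs_neg] at h5
      exact h5
    have e2 : |t ^ 3 / 6| = |t| ^ 3 / 6 := by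
      rw [_root_.abs_div, ← _root_.pow_abs]
      norm_num
    have e3 : |t| ^ 4 ≤ |t| ^ 3 := pow_le_pow_of_le_one (abs_nonneg t) h (by norm_num)
    linarith [pow_nonneg (abs_nonneg t) 3, pow_le_pow_of_le_one (abs_nonneg t) h (by norm_num : 3 ≤ 5)]
  have h2 : |Real.sin t + t| ≤ 2 * |t| := by
    calc |Real.sin t + t| ≤ |Real.sin t| + |t| := abs_add_le _ _
      _ ≤ 2 * |t| := by nlinarith
  have h3 : Real.sin t ^ 2 - t ^ 2 = (Real.sin t - t) * (Real.sin t + t) := by ring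
  rw [h3, abs_mul]
  have h4 : |t| ^ 3 * (2 * |t|) = 2 * t ^ 4 := by
    have : |t| ^ 4 = t ^ 4 := by
      rw [_root_.pow_abs, _root_.abs_of_nonneg (by positivity)]
    nlinarith
  nlinarith [abs_nonneg (Real.sin t - t), abs_nonneg (Real.sin t + t), abs_nonneg t,
    mul_le_mul h1 h2 (abs_nonneg _) (pow_nonneg (abs_nonneg t) 3)]

/-- E(g_zz) = (π²/20)·(g_zz/g_yy)² + O((g_zz/g_yy)⁴) as g_zz → 0. -/
theorem error_quadratic_in_gzz (gyy : ℝ) (hg : 0 < gyy) :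
    (fun gzz : ℝ => Egate gyy gzz - (Real.pi ^ 2 / 20) * (gzz / gyy) ^ 2) =O[nhds 0]
      fun gzz : ℝ => (gzz / gyy) ^ 4 := by
  have hgne : gyy ≠ 0 := ne_of_gt hg
  apply Asymptotics.IsBigO.of_bound (Real.pi ^ 4)
  filter_upwards [Metric.ball_mem_nhds (0 : ℝ) hg] with z hz
  rw [Real.norm_eq_abs, Real.norm_eq_abs, Egate_eq gyy z hgne]
  set x := z / gyy with hx
  set t := Real.pi * z / (4 * gyy) with ht
  have htx : t = Real.pi / 4 * x := by
    rw [ht, hx]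
    field_simp
  have hxlt : |x| < 1 := by
    rw [hx, abs_div, abs_of_pos hg, div_lt_one hg]
    simpa [Real.dist_eq] using hz
  have hpi4 : Real.pi / 4 < 1 := by nlinarith [Real.pi_lt_d2]
  have ht1 : |t| ≤ 1 := by
    rw [htx, abs_mul]
    have h0 : |Real.pi / 4| = Real.pi / 4 := abs_of_pos (by positivity)
    nlinarith [abs_nonneg x, Real.pi_pos]
  have hkey := key_ineq t ht1
  have he : 4 / 5 * Real.sin t ^ 2 - Real.pi ^ 2 / 20 * x ^ 2
      = 4 / 5 * (Real.sin t ^ 2 - t ^ 2) := by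
    rw [htx]; ring
  rw [he, abs_mul]
  have hx4 : |x ^ 4| = x ^ 4 := abs_of_nonneg (by positivity)
  have ht4 : t ^ 4 = (Real.pi / 4) ^ 4 * x ^ 4 := by rw [htx]; ring
  have h45 : |(4 : ℝ) / 5| = 4 / 5 := by norm_num
  rw [h45, hx4]
  have hpipow : (4 : ℝ) / 5 * (2 * ((Real.pi / 4) ^ 4 * x ^ 4)) ≤ Real.pi ^ 4 * x ^ 4 := by
    nlinarith [pow_nonneg (sq_nonneg x) 2, Real.pi_pos, sq_nonneg x, sq_nonneg (x^2)]
  nlinarith [hkey, sq_nonneg (x ^ 2)]
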